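/- arXiv:0806.1752 — 3 statements merged into one kernel-verified Lean document; each statement's English description precedes it below -/
import Mathlib

section
/- Let Q : ℝ³ → ℝ be a Schwartz (smooth, rapidly decaying together with all derivatives) solution of the elliptic equation -Q + ΔQ + Q³ = 0. Then the Pohozhaev-type identities hold: ∫ Q⁴ = 4 ∫ Q² and ∫ |∇Q|² = 3 ∫ Q². -/
open MeasureTheory

noncomputable section

abbrev R3 := EuclideanSpace ℝ (Fin 3)

/-- The Laplacian of `f : ℝ³ → ℝ`, as the sum of the second partial derivatives. -/
def lap (f : R3 → ℝ) (x : R3) : ℝ :=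
  ∑ i : Fin 3, fderiv ℝ (fun y => fderiv ℝ f y (EuclideanSpace.single i 1)) x
    (EuclideanSpace.single i 1)

namespace Poho

open SchwartzMap

def e (i : Fin 3) : R3 := EuclideanSpace.single i 1

def pd (i : Fin 3) (f : SchwartzMap R3 ℝ) : SchwartzMap R3 ℝ := LineDeriv.lineDerivOpCLM ℝ (SchwartzMap R3 ℝ) (e i) f

lemma pd_apply (i : Fin 3) (f : SchwartzMap R3 ℝ) (x : R3) : pd i f x = fderiv ℝ f x (e i) :=
  rfl

def cm (j : Fin 3) (f : SchwartzMap R3 ℝ) : SchwartzMap R3 ℝ :=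
  SchwartzMap.bilinLeftCLM (ContinuousLinearMap.mul ℝ ℝ)
    (EuclideanSpace.proj (𝕜 := ℝ) j).hasTemperateGrowth f

lemma cm_apply (j : Fin 3) (f : SchwartzMap R3 ℝ) (x : R3) : cm j f x = f x * x j := rfl

lemma bdd (f : SchwartzMap R3 ℝ) : ∃ C, ∀ x, ‖f x‖ ≤ C :=
  ⟨_, fun x => f.norm_le_seminorm ℝ x⟩

lemma bdd2 (f : SchwartzMap R3 ℝ) : ∃ C, ∀ x, ‖f x * f x‖ ≤ C := by
  obtain ⟨C, hC⟩ := bdd f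
  exact ⟨C * C, fun x => by
    rw [norm_mul]
    exact mul_le_mul (hC x) (hC x) (norm_nonneg _) ((norm_nonneg _).trans (hC x))⟩

lemma int_mul (f g : SchwartzMap R3 ℝ) : Integrable (fun x => f x * g x) volume :=
  (g.integrable).bdd_mul f.continuous.aestronglyMeasurable
    (Filter.Eventually.of_forall (bdd f).choose_spec)

lemma int_bmul {b : R3 → ℝ} (hbm : AEStronglyMeasurable b volume) (hb : ∃ C, ∀ x, ‖b x‖ ≤ C)
    (f g : SchwartzMap R3 ℝ) : Integrable (fun x => b x * (f x * g x)) volume :=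
  (int_mul f g).bdd_mul hbm (Filter.Eventually.of_forall hb.choose_spec)

lemma int_xmul (j : Fin 3) (f g : SchwartzMap R3 ℝ) :
    Integrable (fun x : R3 => x j * (f x * g x)) volume :=
  (int_mul (cm j f) g).congr (Filter.Eventually.of_forall fun x => by
    simp only [cm_apply]; ring)

lemma int_xbmul (j : Fin 3) {b : R3 → ℝ} (hbm : AEStronglyMeasurable b volume)
    (hb : ∃ C, ∀ x, ‖b x‖ ≤ C) (f g : SchwartzMap R3 ℝ) :
    Integrable (fun x : R3 => x j * (b x * (f x * g x))) volume :=
  ((int_mul (cm j f) g).bdd_mul hbm (Filter.Eventually.of_forall hb.choose_spec)).congr (Filter.Eventually.of_forall fun x => by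
    simp only [Pi.mul_apply, cm_apply]; ring)

lemma ibp (f g : SchwartzMap R3 ℝ) (v : R3) :
    ∫ x : R3, f x * fderiv ℝ (⇑g) x v = -∫ x : R3, fderiv ℝ (⇑f) x v * g x := by
  apply integral_mul_fderiv_eq_neg_fderiv_mul_of_integrable
  · exact (int_mul (LineDeriv.lineDerivOpCLM ℝ (SchwartzMap R3 ℝ) v f) g).congr
      (Filter.Eventually.of_forall fun x => by simp [LineDeriv.lineDerivOpCLM_apply, SchwartzMap.lineDerivOp_apply_eq_fderiv])
  · exact (int_mul f (LineDeriv.lineDerivOpCLM ℝ (SchwartzMap R3 ℝ) v g)).congr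
      (Filter.Eventually.of_forall fun x => by simp [LineDeriv.lineDerivOpCLM_apply, SchwartzMap.lineDerivOp_apply_eq_fderiv])
  · exact int_mul f g
  · exact fun x _ => f.differentiable x
  · exact fun x _ => g.differentiable x

lemma coord_eq (j : Fin 3) : (fun x : R3 => (x j : ℝ)) = ⇑(EuclideanSpace.proj (𝕜 := ℝ) j) := rfl

lemma fderiv_coord (j : Fin 3) (x : R3) :
    fderiv ℝ (fun y : R3 => (y j : ℝ)) x (e j) = 1 := by
  rw [coord_eq, ContinuousLinearMap.fderiv]
  simp [e, EuclideanSpace.single_apply]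

lemma ibp_coord (j : Fin 3) {g : R3 → ℝ} (hg : Differentiable ℝ g)
    (h1 : Integrable g volume)
    (h2 : Integrable (fun x : R3 => x j * fderiv ℝ g x (e j)) volume)
    (h3 : Integrable (fun x : R3 => x j * g x) volume) :
    ∫ x : R3, x j * fderiv ℝ g x (e j) = -∫ x : R3, g x := by
  have H := integral_mul_fderiv_eq_neg_fderiv_mul_of_integrable (μ := volume)
    (f := fun x : R3 => (x j : ℝ)) (g := g) (v := e j)
    (by apply h1.congr (Filter.Eventually.of_forall fun x => ?_)
        rw [fderiv_coord j x]; ring)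
    h2 h3
    (by rw [coord_eq]; exact fun x _ => (EuclideanSpace.proj (𝕜 := ℝ) j).differentiableAt)
    (fun x _ => hg x)
  rw [H]
  congr 1
  apply integral_congr_ae (Filter.Eventually.of_forall fun x => ?_)
  rw [fderiv_coord j x]; ring

lemma diff_fderiv (f : SchwartzMap R3 ℝ) : Differentiable ℝ (fderiv ℝ (⇑f)) :=
  ((f.smooth ⊤).fderiv_right (m := 1) (by exact WithTop.coe_le_coe.mpr le_top)).differentiable
    (by norm_num)

lemma fderiv_fderiv_apply (f : SchwartzMap R3 ℝ) (x v w : R3) :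
    fderiv ℝ (fun y => fderiv ℝ (⇑f) y w) x v = fderiv ℝ (fderiv ℝ (⇑f)) x v w := by
  have h : fderiv ℝ (fun y => fderiv ℝ (⇑f) y w) x
      = ((fderiv ℝ (fderiv ℝ (⇑f)) x).flip w) := by
    have := fderiv_clm_apply (c := fderiv ℝ (⇑f)) (u := fun _ : R3 => w)
      ((diff_fderiv f) x) (differentiableAt_const w)
    simpa using this
  rw [h]; rfl

lemma symm2 (f : SchwartzMap R3 ℝ) (x : R3) (v w : R3) :
    fderiv ℝ (fun y => fderiv ℝ (⇑f) y w) x v = fderiv ℝ (fun y => fderiv ℝ (⇑f) y v) x w := by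
  rw [fderiv_fderiv_apply, fderiv_fderiv_apply]
  exact ((f.smooth 2).contDiffAt.isSymmSndFDerivAt (by norm_num)).eq v w

lemma pd_symm (f : SchwartzMap R3 ℝ) (i j : Fin 3) (x : R3) :
    fderiv ℝ (⇑(pd j f)) x (e i) = fderiv ℝ (⇑(pd i f)) x (e j) := by
  have h : ⇑(pd j f) = fun y => fderiv ℝ (⇑f) y (e j) := funext fun y => pd_apply j f y
  have h' : ⇑(pd i f) = fun y => fderiv ℝ (⇑f) y (e i) := funext fun y => pd_apply i f y
  rw [h, h', symm2]

lemma hasfd_sq (f : SchwartzMap R3 ℝ) (x : R3) :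
    HasFDerivAt (fun y => f y * f y) ((2 * f x) • fderiv ℝ (⇑f) x) x := by
  have h := (f.differentiable x).hasFDerivAt
  have h2 := h.mul h
  refine h2.congr_fderiv ?_
  ext v
  simp [ContinuousLinearMap.smul_apply]
  ring

lemma fderiv_sq (f : SchwartzMap R3 ℝ) (x v : R3) :
    fderiv ℝ (fun y => f y * f y) x v = 2 * f x * fderiv ℝ (⇑f) x v := by
  rw [(hasfd_sq f x).fderiv]
  simp [mul_assoc]

lemma hasfd_p4 (f : SchwartzMap R3 ℝ) (x : R3) :
    HasFDerivAt (fun y => f y ^ 4) ((4 * f x ^ 3) • fderiv ℝ (⇑f) x) x := by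
  have h := (hasfd_sq f x).mul (hasfd_sq f x)
  have e1 : (fun y : R3 => (f y * f y) * (f y * f y)) = fun y => f y ^ 4 := by
    funext y; ring
  rw [show ((fun y : R3 => f y * f y) * fun y => f y * f y) = fun y => f y ^ 4 from e1] at h
  refine h.congr_fderiv ?_
  ext v
  simp [ContinuousLinearMap.smul_apply]
  ring

lemma fderiv_p4 (f : SchwartzMap R3 ℝ) (x v : R3) :
    fderiv ℝ (fun y => f y ^ 4) x v = 4 * f x ^ 3 * fderiv ℝ (⇑f) x v := by
  rw [(hasfd_p4 f x).fderiv]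
  simp [mul_assoc]

lemma grad_sq (f : R3 → ℝ) (x : R3) :
    ‖gradient f x‖ ^ 2 = ∑ i : Fin 3, (fderiv ℝ f x (e i)) ^ 2 := by
  have hv : ∀ i : Fin 3, gradient f x i = fderiv ℝ f x (e i) := by
    intro i
    have h1 : (inner ℝ (gradient f x) (EuclideanSpace.single i (1 : ℝ)) : ℝ)
        = fderiv ℝ f x (e i) := by
      rw [gradient]
      exact InnerProductSpace.toDual_symm_apply
    rwa [EuclideanSpace.inner_single_right, RCLike.conj_to_real, one_mul] at h1
  rw [EuclideanSpace.norm_eq, Real.sq_sqrt (by positivity)]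
  exact Finset.sum_congr rfl fun i _ => by rw [Real.norm_eq_abs, sq_abs, hv i]

lemma lap_eq (f : SchwartzMap R3 ℝ) (x : R3) :
    lap (fun y => f y) x = ∑ i : Fin 3, fderiv ℝ (⇑(pd i f)) x (e i) := by
  unfold lap
  refine Finset.sum_congr rfl fun i _ => ?_
  congr 1

lemma key1 (f : SchwartzMap R3 ℝ) (j : Fin 3) :
    ∫ x : R3, x j * (f x * fderiv ℝ (⇑f) x (e j)) = -(1/2) * ∫ x : R3, f x * f x := by
  have hg : Differentiable ℝ (fun y : R3 => f y * f y) := f.differentiable.mul f.differentiable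
  have h1 : Integrable (fun y : R3 => f y * f y) volume := int_mul f f
  have h2 : Integrable (fun x : R3 => x j * fderiv ℝ (fun y : R3 => f y * f y) x (e j))
      volume := by
    refine ((int_xmul j f (pd j f)).const_mul 2).congr (Filter.Eventually.of_forall fun x => ?_)
    simp only [fderiv_sq, pd_apply]; ring
  have h3 : Integrable (fun x : R3 => x j * (f x * f x)) volume := int_xmul j f f
  have H := ibp_coord j hg h1 h2 h3
  calc ∫ x : R3, x j * (f x * fderiv ℝ (⇑f) x (e j))
      = ∫ x : R3, (1/2 : ℝ) * (x j * fderiv ℝ (fun y : R3 => f y * f y) x (e j)) := by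
        apply integral_congr_ae (Filter.Eventually.of_forall fun x => ?_)
        rw [fderiv_sq]; ring
    _ = (1/2 : ℝ) * ∫ x : R3, x j * fderiv ℝ (fun y : R3 => f y * f y) x (e j) :=
        integral_const_mul _ _
    _ = -(1/2) * ∫ x : R3, f x * f x := by rw [H]; ring

lemma key3 (f : SchwartzMap R3 ℝ) (j : Fin 3) :
    ∫ x : R3, x j * (f x ^ 3 * fderiv ℝ (⇑f) x (e j)) = -(1/4) * ∫ x : R3, f x ^ 4 := by
  have hbm : AEStronglyMeasurable (fun x : R3 => f x * f x) volume :=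
    (f.continuous.mul f.continuous).aestronglyMeasurable
  have hg : Differentiable ℝ (fun y : R3 => f y ^ 4) := fun x => (hasfd_p4 f x).differentiableAt
  have h1 : Integrable (fun y : R3 => f y ^ 4) volume :=
    (int_bmul hbm (bdd2 f) f f).congr (Filter.Eventually.of_forall fun x => by ring)
  have h2 : Integrable (fun x : R3 => x j * fderiv ℝ (fun y : R3 => f y ^ 4) x (e j))
      volume := by
    refine ((int_xbmul j hbm (bdd2 f) f (pd j f)).const_mul 4).congr
      (Filter.Eventually.of_forall fun x => ?_)
    simp only [fderiv_p4, pd_apply]; ring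
  have h3 : Integrable (fun x : R3 => x j * f x ^ 4) volume :=
    (int_xbmul j hbm (bdd2 f) f f).congr (Filter.Eventually.of_forall fun x => by ring)
  have H := ibp_coord j hg h1 h2 h3
  calc ∫ x : R3, x j * (f x ^ 3 * fderiv ℝ (⇑f) x (e j))
      = ∫ x : R3, (1/4 : ℝ) * (x j * fderiv ℝ (fun y : R3 => f y ^ 4) x (e j)) := by
        apply integral_congr_ae (Filter.Eventually.of_forall fun x => ?_)
        rw [fderiv_p4]; ring
    _ = (1/4 : ℝ) * ∫ x : R3, x j * fderiv ℝ (fun y : R3 => f y ^ 4) x (e j) :=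
        integral_const_mul _ _
    _ = -(1/4) * ∫ x : R3, f x ^ 4 := by rw [H]; ring

lemma fderiv_xmul (Q : SchwartzMap R3 ℝ) (j : Fin 3) (x v : R3) :
    fderiv ℝ (fun y : R3 => y j * pd j Q y) x v
      = v j * pd j Q x + x j * fderiv ℝ (⇑(pd j Q)) x v := by
  have h1 : HasFDerivAt (fun y : R3 => (y j : ℝ)) (EuclideanSpace.proj (𝕜 := ℝ) j) x := by
    rw [coord_eq]; exact (EuclideanSpace.proj (𝕜 := ℝ) j).hasFDerivAt
  have h2 := ((pd j Q).differentiable x).hasFDerivAt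
  rw [show (fun y : R3 => y j * pd j Q y) = (fun y : R3 => (y j : ℝ)) * ⇑(pd j Q) from rfl,
    (h1.mul h2).fderiv]
  have hp : (EuclideanSpace.proj (𝕜 := ℝ) j) v = v j := rfl
  simp only [ContinuousLinearMap.add_apply, ContinuousLinearMap.smul_apply, smul_eq_mul, hp]
  ring

lemma diff_xmul (Q : SchwartzMap R3 ℝ) (j : Fin 3) :
    Differentiable ℝ (fun y : R3 => y j * pd j Q y) := by
  have h1 : Differentiable ℝ (fun y : R3 => (y j : ℝ)) := by
    rw [coord_eq]; exact (EuclideanSpace.proj (𝕜 := ℝ) j).differentiable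
  exact h1.mul (pd j Q).differentiable

lemma step2 (Q : SchwartzMap R3 ℝ) (i j : Fin 3) :
    ∫ x : R3, (x j * pd j Q x) * fderiv ℝ (⇑(pd i Q)) x (e i)
      = -((∫ x : R3, (e i) j * (pd j Q x * pd i Q x))
          + ∫ x : R3, x j * (pd i (pd j Q) x * pd i Q x)) := by
  have hint1 : Integrable (fun x : R3 => (e i) j * (pd j Q x * pd i Q x)) volume :=
    (int_mul (pd j Q) (pd i Q)).const_mul _
  have hint2 : Integrable (fun x : R3 => x j * (pd i (pd j Q) x * pd i Q x)) volume :=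
    int_xmul j (pd i (pd j Q)) (pd i Q)
  have hfd : (fun x : R3 => fderiv ℝ (fun y : R3 => y j * pd j Q y) x (e i) * pd i Q x)
      = fun x : R3 => (e i) j * (pd j Q x * pd i Q x)
          + x j * (pd i (pd j Q) x * pd i Q x) := by
    funext x
    rw [fderiv_xmul]
    simp only [pd_apply]
    ring
  have H := integral_mul_fderiv_eq_neg_fderiv_mul_of_integrable (μ := volume)
    (f := fun x : R3 => x j * pd j Q x) (g := ⇑(pd i Q)) (v := e i)
    (by rw [hfd]; exact hint1.add hint2)
    ((int_xmul j (pd j Q) (pd i (pd i Q))).congr (Filter.Eventually.of_forall fun x => by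
      simp only [pd_apply]; ring))
    ((int_xmul j (pd j Q) (pd i Q)).congr (Filter.Eventually.of_forall fun x => by ring))
    (fun x _ => diff_xmul Q j x) (fun x _ => (pd i Q).differentiable x)
  rw [H, hfd, integral_add hint1 hint2]

end Poho

open Poho

/-- Pohozhaev identities for a Schwartz solution of `-Q + ΔQ + Q³ = 0`:
`∫ Q⁴ = 4 ∫ Q²` and `∫ |∇Q|² = 3 ∫ Q²`. -/
theorem pohozhaev_identities (Q : SchwartzMap R3 ℝ)
    (hQ : ∀ x : R3, -Q x + lap (fun y => Q y) x + (Q x) ^ 3 = 0) :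
    (∫ x : R3, (Q x) ^ 4) = 4 * ∫ x : R3, (Q x) ^ 2 ∧
    (∫ x : R3, ‖gradient (fun y => Q y) x‖ ^ 2) = 3 * ∫ x : R3, (Q x) ^ 2 := by
  classical
  set A : ℝ := ∫ x : R3, (Q x) ^ 2 with hA
  set F : ℝ := ∫ x : R3, (Q x) ^ 4 with hF
  set G : Fin 3 → ℝ := fun i => ∫ x : R3, pd i Q x * pd i Q x with hG
  have hbm : AEStronglyMeasurable (fun x : R3 => Q x * Q x) volume :=
    (Q.continuous.mul Q.continuous).aestronglyMeasurable
  -- integrability facts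
  have hint2 : Integrable (fun x : R3 => (Q x) ^ 2) volume :=
    (int_mul Q Q).congr (Filter.Eventually.of_forall fun x => by ring)
  have hint4 : Integrable (fun x : R3 => (Q x) ^ 4) volume :=
    (int_bmul hbm (bdd2 Q) Q Q).congr (Filter.Eventually.of_forall fun x => by ring)
  have hlap_int : Integrable (fun x : R3 => Q x * lap (fun y => Q y) x) volume := by
    have h : (fun x : R3 => Q x * lap (fun y => Q y) x)
        = fun x : R3 => ∑ i : Fin 3, Q x * pd i (pd i Q) x := by
      funext x
      rw [lap_eq, Finset.mul_sum]
      exact Finset.sum_congr rfl fun i _ => by rw [pd_apply]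
    rw [h]
    exact integrable_finset_sum _ fun i _ => int_mul Q (pd i (pd i Q))
  -- ∫ Q Δ Q = - ∑ G i
  have hIlap : ∫ x : R3, Q x * lap (fun y => Q y) x = -∑ i : Fin 3, G i := by
    have h : (fun x : R3 => Q x * lap (fun y => Q y) x)
        = fun x : R3 => ∑ i : Fin 3, Q x * pd i (pd i Q) x := by
      funext x
      rw [lap_eq, Finset.mul_sum]
      exact Finset.sum_congr rfl fun i _ => by rw [pd_apply]
    rw [h, integral_finset_sum _ fun i _ => int_mul Q (pd i (pd i Q)), ← Finset.sum_neg_distrib]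
    refine Finset.sum_congr rfl fun i _ => ?_
    have h1 : ∫ x : R3, Q x * pd i (pd i Q) x
        = ∫ x : R3, Q x * fderiv ℝ (⇑(pd i Q)) x (e i) := by
      apply integral_congr_ae (Filter.Eventually.of_forall fun x => ?_)
      rw [pd_apply]
    rw [h1, ibp Q (pd i Q) (e i), hG]
    congr 1
  -- first identity: A = -∑ G + F
  have hS2 : A = (-∑ i : Fin 3, G i) + F := by
    have h : (fun x : R3 => (Q x) ^ 2)
        = fun x : R3 => Q x * lap (fun y => Q y) x + (Q x) ^ 4 := by
      funext x
      linear_combination (-(Q x)) * hQ x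
    rw [hA, h, integral_add hlap_int hint4, hIlap, hF]
  -- Pohozhaev identity, coordinate by coordinate
  have hperj : ∀ j : Fin 3,
      -(1/2 : ℝ) * ∫ x : R3, Q x * Q x
        = (-(G j) + (1/2) * ∑ i : Fin 3, G i) + (-(1/4) * F) := by
    intro j
    -- ∫ xⱼ ∂ⱼQ ΔQ
    have hlapj : ∫ x : R3, (x j * pd j Q x) * lap (fun y => Q y) x
        = ∑ i : Fin 3, ∫ x : R3, (x j * pd j Q x) * fderiv ℝ (⇑(pd i Q)) x (e i) := by
      have h : (fun x : R3 => (x j * pd j Q x) * lap (fun y => Q y) x)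
          = fun x : R3 => ∑ i : Fin 3, (x j * pd j Q x) * fderiv ℝ (⇑(pd i Q)) x (e i) := by
        funext x
        rw [lap_eq, Finset.mul_sum]
      rw [h]
      refine integral_finset_sum _ fun i _ => ?_
      exact (int_xmul j (pd j Q) (pd i (pd i Q))).congr (Filter.Eventually.of_forall fun x => by
        simp only [pd_apply]; ring)
    have hT2 : ∫ x : R3, (x j * pd j Q x) * lap (fun y => Q y) x
        = -(G j) + (1/2) * ∑ i : Fin 3, G i := by
      rw [hlapj]
      have hstep : ∀ i : Fin 3,
          ∫ x : R3, (x j * pd j Q x) * fderiv ℝ (⇑(pd i Q)) x (e i)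
            = -(∫ x : R3, (e i) j * (pd j Q x * pd i Q x)) + (1/2) * G i := by
        intro i
        rw [step2 Q i j]
        have hsym : ∫ x : R3, x j * (pd i (pd j Q) x * pd i Q x)
            = ∫ x : R3, x j * (pd i Q x * fderiv ℝ (⇑(pd i Q)) x (e j)) := by
          apply integral_congr_ae (Filter.Eventually.of_forall fun x => ?_)
          rw [pd_apply i (pd j Q) x, pd_symm Q i j x]
          ring
        rw [hsym, key1 (pd i Q) j, hG]
        ring
      rw [Finset.sum_congr rfl fun i _ => hstep i]
      rw [Finset.sum_add_distrib]
      have hdelta : ∑ i : Fin 3, -(∫ x : R3, (e i) j * (pd j Q x * pd i Q x)) = -(G j) := by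
        have h : ∀ i : Fin 3, -(∫ x : R3, (e i) j * (pd j Q x * pd i Q x))
            = (if j = i then -(∫ x : R3, pd j Q x * pd i Q x) else 0) := by
          intro i
          have h2 : (fun x : R3 => (e i) j * (pd j Q x * pd i Q x))
              = fun x : R3 => (if j = i then (1:ℝ) else 0) * (pd j Q x * pd i Q x) := by
            funext x
            congr 1
            simp [e, EuclideanSpace.single_apply]
          rw [h2]
          split
          · simp
          · simp
        rw [Finset.sum_congr rfl fun i _ => h i, Finset.sum_ite_eq]
        simp [hG]
      rw [hdelta, ← Finset.mul_sum]
    -- the pointwise identity multiplied by xⱼ ∂ⱼ Q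
    have hsplit : ∫ x : R3, x j * (Q x * fderiv ℝ (⇑Q) x (e j))
        = (∫ x : R3, (x j * pd j Q x) * lap (fun y => Q y) x)
          + ∫ x : R3, x j * ((Q x) ^ 3 * fderiv ℝ (⇑Q) x (e j)) := by
      have hintlap : Integrable
          (fun x : R3 => (x j * pd j Q x) * lap (fun y => Q y) x) volume := by
        have h : (fun x : R3 => (x j * pd j Q x) * lap (fun y => Q y) x)
            = fun x : R3 => ∑ i : Fin 3, (x j * pd j Q x) * fderiv ℝ (⇑(pd i Q)) x (e i) := by
          funext x
          rw [lap_eq, Finset.mul_sum]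
        rw [h]
        refine integrable_finset_sum _ fun i _ => ?_
        exact (int_xmul j (pd j Q) (pd i (pd i Q))).congr
          (Filter.Eventually.of_forall fun x => by simp only [pd_apply]; ring)
      have hint3 : Integrable
          (fun x : R3 => x j * ((Q x) ^ 3 * fderiv ℝ (⇑Q) x (e j))) volume :=
        (int_xbmul j hbm (bdd2 Q) Q (pd j Q)).congr (Filter.Eventually.of_forall fun x => by
          simp only [pd_apply]; ring)
      have h : (fun x : R3 => x j * (Q x * fderiv ℝ (⇑Q) x (e j)))
          = fun x : R3 => (x j * pd j Q x) * lap (fun y => Q y) x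
              + x j * ((Q x) ^ 3 * fderiv ℝ (⇑Q) x (e j)) := by
        funext x
        rw [pd_apply]
        linear_combination (-(x j * fderiv ℝ (⇑Q) x (e j))) * hQ x
      rw [h, integral_add hintlap hint3]
    have hL := key1 Q j
    have hR := key3 Q j
    rw [hL, hT2, hR] at hsplit
    linarith [hsplit]
  -- convert A' to A
  have hAA : ∫ x : R3, Q x * Q x = A := by
    rw [hA]
    apply integral_congr_ae (Filter.Eventually.of_forall fun x => ?_)
    ring
  have h0 := hperj 0
  have h1 := hperj 1
  have h2 := hperj 2
  rw [hAA] at h0 h1 h2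
  have hGsum : ∑ i : Fin 3, G i = G 0 + G 1 + G 2 := by
    rw [Fin.sum_univ_three]
  rw [hGsum] at hS2 h0 h1 h2
  have hF4 : F = 4 * A := by linarith
  have hG3 : G 0 + G 1 + G 2 = 3 * A := by linarith
  constructor
  · exact hF4
  · -- gradient integral
    have hgrad : (fun x : R3 => ‖gradient (fun y => Q y) x‖ ^ 2)
        = fun x : R3 => ∑ i : Fin 3, (pd i Q x) ^ 2 := by
      funext x
      rw [grad_sq]
      exact Finset.sum_congr rfl fun i _ => by rw [pd_apply]
    rw [hgrad, integral_finset_sum _ fun i _ =>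
      (int_mul (pd i Q) (pd i Q)).congr (Filter.Eventually.of_forall fun x => by ring)]
    have : ∀ i : Fin 3, ∫ x : R3, (pd i Q x) ^ 2 = G i := by
      intro i
      rw [hG]
      apply integral_congr_ae (Filter.Eventually.of_forall fun x => ?_)
      ring
    rw [Fin.sum_univ_three, this 0, this 1, this 2, hG3]
end
end

section
/- Let y : [0,∞) → ℝ be a C² function with y(t) > 0, y'(t) > 0 and y''(t) < 0 for all t ≥ 0, and suppose there is a constant C > 0 such that (y'(t))² ≤ C·y(t)·(y''(t))² for all t ≥ 0. Then: (a) y is bounded on [0,∞), with √(y(t)) ≤ √(y(0)) + √C·y'(0) for all t; (b) there exist constants C', c > 0 such that y'(t) ≤ C'e^{-ct} for all t ≥ 0. -/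
/-- Let `y` be `C²` with `y > 0`, `y' > 0`, `y'' < 0` on `[0,∞)` and
`(y')² ≤ C·y·(y'')²`. Then (a) `√(y(t)) ≤ √(y(0)) + √C·y'(0)` for all `t ≥ 0`, and
(b) `y'` decays exponentially. -/
theorem virial_exponential_decay (y : ℝ → ℝ) (C : ℝ) (hC : 0 < C)
    (hy : ContDiff ℝ 2 y)
    (hpos : ∀ t ≥ (0 : ℝ), 0 < y t)
    (hy' : ∀ t ≥ (0 : ℝ), 0 < deriv y t)
    (hy'' : ∀ t ≥ (0 : ℝ), deriv (deriv y) t < 0)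
    (hCS : ∀ t ≥ (0 : ℝ), (deriv y t) ^ 2 ≤ C * y t * (deriv (deriv y) t) ^ 2) :
    (∀ t ≥ (0 : ℝ), Real.sqrt (y t) ≤ Real.sqrt (y 0) + Real.sqrt C * deriv y 0) ∧
    ∃ C' c : ℝ, 0 < C' ∧ 0 < c ∧ ∀ t ≥ (0 : ℝ), deriv y t ≤ C' * Real.exp (-c * t) := by
  have hdiff : Differentiable ℝ y := hy.differentiable two_ne_zero
  have hy2 : ContDiff ℝ ((1:ℕ)+1) y := hy
  have hy1 : ContDiff ℝ 1 (deriv y) := (contDiff_succ_iff_deriv.mp hy2).2.2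
  have hdiff' : Differentiable ℝ (deriv y) := hy1.differentiable one_ne_zero
  have hcont' : Continuous (deriv y) := hdiff'.continuous
  set s := Real.sqrt C with hs_def
  have hs : 0 < s := Real.sqrt_pos.mpr hC
  have key : ∀ t ≥ (0:ℝ), deriv y t ≤ s * Real.sqrt (y t) * (-(deriv (deriv y) t)) := by
    intro t ht
    have h2 := hCS t ht
    have h3 : Real.sqrt ((deriv y t)^2) ≤ Real.sqrt (C * y t * (deriv (deriv y) t)^2) :=
      Real.sqrt_le_sqrt h2
    rw [Real.sqrt_sq (hy' t ht).le] at h3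
    calc deriv y t ≤ _ := h3
      _ = s * Real.sqrt (y t) * (-(deriv (deriv y) t)) := by
          rw [Real.sqrt_mul (mul_nonneg hC.le (hpos t ht).le), Real.sqrt_mul hC.le,
            Real.sqrt_sq_eq_abs, abs_of_neg (hy'' t ht)]
  -- part (a)
  set g := fun u => 2 * Real.sqrt (y u) + s * deriv y u with hg_def
  have hgderiv : ∀ t ∈ Set.Ioi (0:ℝ),
      HasDerivAt g (deriv y t / Real.sqrt (y t) + s * deriv (deriv y) t) t := by
    intro t ht
    have hyt : (0:ℝ) < y t := hpos t (le_of_lt ht)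
    have hst : (0:ℝ) < Real.sqrt (y t) := Real.sqrt_pos.mpr hyt
    have h1 : HasDerivAt (fun u => Real.sqrt (y u)) (1 / (2 * Real.sqrt (y t)) * deriv y t) t :=
      (Real.hasDerivAt_sqrt hyt.ne').comp t (hdiff t).hasDerivAt
    have h2 : HasDerivAt (deriv y) (deriv (deriv y) t) t := (hdiff' t).hasDerivAt
    have h3 := (h1.const_mul 2).add (h2.const_mul s)
    refine h3.congr_deriv ?_
    ring
  have hganti : AntitoneOn g (Set.Ici (0:ℝ)) := by
    apply antitoneOn_of_deriv_nonpos (convex_Ici 0)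
    · exact ((continuous_const.mul (Real.continuous_sqrt.comp hdiff.continuous)).add
        (continuous_const.mul hcont')).continuousOn
    · rw [interior_Ici]
      exact fun t ht => (hgderiv t ht).differentiableAt.differentiableWithinAt
    · rw [interior_Ici]
      intro t ht
      rw [(hgderiv t ht).deriv]
      have hst : (0:ℝ) < Real.sqrt (y t) := Real.sqrt_pos.mpr (hpos t ht.le)
      have hk := key t ht.le
      rw [div_add' _ _ _ hst.ne']
      apply div_nonpos_of_nonpos_of_nonneg _ hst.le
      nlinarith [hk]
  have parta : ∀ t ≥ (0:ℝ), Real.sqrt (y t) ≤ Real.sqrt (y 0) + s * deriv y 0 := by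
    intro t ht
    have := hganti (Set.self_mem_Ici) ht ht
    have h0 := hy' t ht
    simp only [hg_def] at this
    nlinarith [hs, hy' 0 le_rfl]
  refine ⟨parta, ?_⟩
  -- part (b)
  set M := Real.sqrt (y 0) + s * deriv y 0 with hM_def
  have hM : 0 < M := by
    have := Real.sqrt_pos.mpr (hpos 0 le_rfl)
    have := hy' 0 le_rfl
    positivity
  set c := (s * M)⁻¹ with hc_def
  have hc : 0 < c := by positivity
  set h := fun u => deriv y u * Real.exp (c * u) with hh_def
  have hhderiv : ∀ t ∈ Set.Ioi (0:ℝ),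
      HasDerivAt h (deriv (deriv y) t * Real.exp (c * t) + deriv y t * (Real.exp (c * t) * c)) t := by
    intro t ht
    have h2 : HasDerivAt (deriv y) (deriv (deriv y) t) t := (hdiff' t).hasDerivAt
    have h3 : HasDerivAt (fun u => Real.exp (c * u)) (Real.exp (c * t) * c) t := by
      simpa using ((hasDerivAt_id t).const_mul c).exp
    exact h2.mul h3
  have hhanti : AntitoneOn h (Set.Ici (0:ℝ)) := by
    apply antitoneOn_of_deriv_nonpos (convex_Ici 0)
    · exact (hcont'.mul (Real.continuous_exp.comp (continuous_const.mul continuous_id))).continuousOn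
    · rw [interior_Ici]
      exact fun t ht => (hhderiv t ht).differentiableAt.differentiableWithinAt
    · rw [interior_Ici]
      intro t ht
      rw [(hhderiv t ht).deriv]
      have hk := key t ht.le
      have hb : Real.sqrt (y t) ≤ M := parta t ht.le
      have h4 : deriv y t ≤ s * M * (-(deriv (deriv y) t)) := by
        have h6 := mul_le_mul_of_nonneg_right (mul_le_mul_of_nonneg_left hb hs.le)
          (neg_nonneg.mpr (hy'' t ht.le).le)
        linarith
      have h5 : c * deriv y t ≤ -(deriv (deriv y) t) := by
        rw [hc_def]
        rw [inv_mul_le_iff₀ (by positivity)]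
        linarith [h4]
      have hep : (0:ℝ) < Real.exp (c * t) := Real.exp_pos _
      nlinarith [h5, hep]
  refine ⟨deriv y 0, c, hy' 0 le_rfl, hc, ?_⟩
  intro t ht
  have := hhanti Set.self_mem_Ici ht ht
  simp only [hh_def, mul_zero, Real.exp_zero, mul_one] at this
  rw [neg_mul, Real.exp_neg, ← div_eq_mul_inv, le_div_iff₀ (Real.exp_pos _)]
  exact this
end

section
/- Let e₀, γ₂ > 0, t₀ ∈ ℝ, and let α : [t₀,∞) → ℝ be a C¹ bounded function satisfying |α'(t) − e₀α(t)| ≤ C e^{-γ₂t} for all t ≥ t₀. Then |α(t)| ≤ (C/γ₂) e^{-γ₂t} for all t ≥ t₀. -/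
open Filter Topology

lemma exp_neg_mul_tendsto (c : ℝ) (hc : 0 < c) :
    Tendsto (fun t : ℝ => Real.exp (-c * t)) atTop (𝓝 0) := by
  have h1 : Tendsto (fun t : ℝ => -c * t) atTop atBot :=
    (tendsto_const_mul_atBot_of_neg (by linarith)).2 tendsto_id
  exact Real.tendsto_exp_atBot.comp h1

/-- If `α` is bounded, `C¹`, and `|α'(t) − e₀α(t)| ≤ C e^{-γ₂t}` for `t ≥ t₀`
with `e₀, γ₂ > 0`, then `|α(t)| ≤ (C/γ₂) e^{-γ₂t}` for all `t ≥ t₀`. -/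
theorem unstable_mode_decay (e₀ γ₂ t₀ C : ℝ) (he₀ : 0 < e₀) (hγ : 0 < γ₂) (hC : 0 < C)
    (α : ℝ → ℝ) (hα : ContDiff ℝ 1 α)
    (hbdd : ∃ M : ℝ, ∀ t ≥ t₀, |α t| ≤ M)
    (hineq : ∀ t ≥ t₀, |deriv α t - e₀ * α t| ≤ C * Real.exp (-γ₂ * t)) :
    ∀ t ≥ t₀, |α t| ≤ (C / γ₂) * Real.exp (-γ₂ * t) := by
  obtain ⟨M, hM⟩ := hbdd
  have hαd : Differentiable ℝ α := hα.differentiable one_ne_zero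
  set b : ℝ := e₀ + γ₂ with hbdef
  have hb : 0 < b := by positivity
  set g : ℝ → ℝ := fun t => Real.exp (-e₀ * t) * α t with hgdef
  have hg' : ∀ t, HasDerivAt g (Real.exp (-e₀ * t) * (deriv α t - e₀ * α t)) t := by
    intro t
    have h1 : HasDerivAt (fun s : ℝ => Real.exp (-e₀ * s))
        (Real.exp (-e₀ * t) * (-e₀ * 1)) t :=
      ((hasDerivAt_id t).const_mul (-e₀)).exp
    have h2 : HasDerivAt α (deriv α t) t := (hαd t).hasDerivAt
    have := h1.mul h2
    refine this.congr_deriv ?_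
    ring
  have hφ' : ∀ t, HasDerivAt (fun s : ℝ => (C / b) * Real.exp (-b * s))
      (-(C * Real.exp (-b * t))) t := by
    intro t
    have h1 : HasDerivAt (fun s : ℝ => Real.exp (-b * s))
        (Real.exp (-b * t) * (-b * 1)) t :=
      ((hasDerivAt_id t).const_mul (-b)).exp
    have := h1.const_mul (C / b)
    refine this.congr_deriv ?_
    field_simp
  -- Tendsto g atTop 0
  have hgtend : Tendsto g atTop (𝓝 0) := by
    have h1 : ∀ᶠ t in atTop, ‖g t‖ ≤ M * Real.exp (-e₀ * t) := by
      filter_upwards [eventually_ge_atTop t₀] with t ht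
      have : ‖g t‖ = Real.exp (-e₀ * t) * |α t| := by
        simp [hgdef, abs_mul, abs_of_pos (Real.exp_pos _)]
      rw [this, mul_comm]
      exact mul_le_mul_of_nonneg_right (hM t ht) (Real.exp_pos _).le
    have h2 : Tendsto (fun t : ℝ => M * Real.exp (-e₀ * t)) atTop (𝓝 0) := by
      simpa using (exp_neg_mul_tendsto e₀ he₀).const_mul M
    exact squeeze_zero_norm' h1 h2
  have hφtend : Tendsto (fun t : ℝ => (C / b) * Real.exp (-b * t)) atTop (𝓝 0) := by
    simpa using (exp_neg_mul_tendsto b hb).const_mul (C / b)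
  -- derivative bound
  have hkey : ∀ t ≥ t₀, |Real.exp (-e₀ * t) * (deriv α t - e₀ * α t)|
      ≤ C * Real.exp (-b * t) := by
    intro t ht
    rw [abs_mul, abs_of_pos (Real.exp_pos _)]
    calc Real.exp (-e₀ * t) * |deriv α t - e₀ * α t|
        ≤ Real.exp (-e₀ * t) * (C * Real.exp (-γ₂ * t)) :=
          mul_le_mul_of_nonneg_left (hineq t ht) (Real.exp_pos _).le
      _ = C * Real.exp (-b * t) := by
          rw [hbdef, show -(e₀ + γ₂) * t = -e₀ * t + -γ₂ * t by ring, Real.exp_add]; ring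
  -- u := g + φ antitone on Ici t₀
  set u : ℝ → ℝ := fun t => g t + (C / b) * Real.exp (-b * t) with hudef
  have hu' : ∀ t, HasDerivAt u
      (Real.exp (-e₀ * t) * (deriv α t - e₀ * α t) - C * Real.exp (-b * t)) t := by
    intro t
    have := (hg' t).add (hφ' t)
    exact this.congr_deriv (by ring)
  have huanti : AntitoneOn u (Set.Ici t₀) := by
    apply antitoneOn_of_deriv_nonpos (convex_Ici t₀)
    · exact fun t _ => ((hu' t).continuousAt).continuousWithinAt
    · exact fun t _ => ((hu' t).differentiableAt).differentiableWithinAt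
    · intro t ht
      rw [(hu' t).deriv]
      have := hkey t (le_of_lt (by simpa using ht))
      have h1 := (abs_le.1 this).2
      linarith
  -- v := g - φ monotone on Ici t₀
  set v : ℝ → ℝ := fun t => g t - (C / b) * Real.exp (-b * t) with hvdef
  have hv' : ∀ t, HasDerivAt v
      (Real.exp (-e₀ * t) * (deriv α t - e₀ * α t) + C * Real.exp (-b * t)) t := by
    intro t
    have := (hg' t).sub (hφ' t)
    exact this.congr_deriv (by ring)
  have hvmono : MonotoneOn v (Set.Ici t₀) := by
    apply monotoneOn_of_deriv_nonneg (convex_Ici t₀)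
    · exact fun t _ => ((hv' t).continuousAt).continuousWithinAt
    · exact fun t _ => ((hv' t).differentiableAt).differentiableWithinAt
    · intro t ht
      rw [(hv' t).deriv]
      have := hkey t (le_of_lt (by simpa using ht))
      have h1 := (abs_le.1 this).1
      linarith
  have hutend : Tendsto u atTop (𝓝 0) := by
    simpa only [add_zero] using hgtend.add hφtend
  have hvtend : Tendsto v atTop (𝓝 0) := by
    simpa only [sub_zero] using hgtend.sub hφtend
  intro t ht
  -- 0 ≤ u t
  have hu0 : 0 ≤ u t := by
    apply le_of_tendsto hutend
    filter_upwards [eventually_ge_atTop t] with s hs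
    exact huanti ht (le_trans ht hs) hs
  have hv0 : v t ≤ 0 := by
    apply ge_of_tendsto hvtend
    filter_upwards [eventually_ge_atTop t] with s hs
    exact hvmono ht (le_trans ht hs) hs
  have hgabs : |g t| ≤ (C / b) * Real.exp (-b * t) := by
    rw [abs_le]
    constructor
    · simp only [hudef] at hu0; linarith
    · simp only [hvdef] at hv0; linarith
  have hαt : |α t| = Real.exp (e₀ * t) * |g t| := by
    have : Real.exp (e₀ * t) * |g t| = Real.exp (e₀ * t) * (Real.exp (-e₀ * t) * |α t|) := by
      simp [hgdef, abs_mul, abs_of_pos (Real.exp_pos _)]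
    rw [this, ← mul_assoc, ← Real.exp_add]
    simp
  rw [hαt]
  calc Real.exp (e₀ * t) * |g t|
      ≤ Real.exp (e₀ * t) * ((C / b) * Real.exp (-b * t)) :=
        mul_le_mul_of_nonneg_left hgabs (Real.exp_pos _).le
    _ = (C / b) * Real.exp (-γ₂ * t) := by
        rw [mul_comm (Real.exp (e₀ * t)), mul_assoc, ← Real.exp_add]
        congr 2
        simp [hbdef]; ring
    _ ≤ (C / γ₂) * Real.exp (-γ₂ * t) := by
        apply mul_le_mul_of_nonneg_right _ (Real.exp_pos _).le
        apply div_le_div_of_nonneg_left hC.le hγ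
        simp [hbdef]; linarith
end
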